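/- Let V : ℝ^l → ℝ be twice continuously differentiable at β₀ with ∇V(β₀) = 0, and let (β_n) be a sequence with ‖β_n − β₀‖ = O(n^{−1/3}). Then √n (V(β_n) − V(β₀)) → 0 as n → ∞. -/

import Mathlib

open Filter

theorem stmt_17 {l : ℕ} (V : EuclideanSpace ℝ (Fin l) → ℝ)
    (β₀ : EuclideanSpace ℝ (Fin l)) (βn : ℕ → EuclideanSpace ℝ (Fin l))
    (hV : ContDiffAt ℝ 2 V β₀)
    (hgrad : fderiv ℝ V β₀ = 0)
    (hrate : ∃ C : ℝ, ∀ n : ℕ, 0 < n → ‖βn n - β₀‖ ≤ C * (n : ℝ) ^ (-(1:ℝ)/3)) :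
    Tendsto (fun n : ℕ => Real.sqrt n * (V (βn n) - V β₀)) atTop (nhds 0) := by
  obtain ⟨C, hC⟩ := hrate
  set C' : ℝ := max C 0 with hC'def
  have hC'0 : 0 ≤ C' := le_max_right _ _
  have hC' : ∀ n : ℕ, 0 < n → ‖βn n - β₀‖ ≤ C' * (n : ℝ) ^ (-(1:ℝ)/3) := by
    intro n hn
    exact (hC n hn).trans (mul_le_mul_of_nonneg_right (le_max_left _ _)
      (Real.rpow_nonneg (Nat.cast_nonneg n) _))
  -- second derivative: fderiv V is differentiable at β₀
  have h1 : ContDiffAt ℝ 1 (fderiv ℝ V) β₀ := hV.fderiv_right (le_refl 2)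
  have h2 : DifferentiableAt ℝ (fderiv ℝ V) β₀ := h1.differentiableAt one_ne_zero
  have hO : (fun x => fderiv ℝ V x - fderiv ℝ V β₀) =O[nhds β₀] fun x => x - β₀ :=
    h2.isBigO_sub
  rw [hgrad] at hO
  simp only [sub_zero] at hO
  obtain ⟨K, hK⟩ := hO.bound
  obtain ⟨u, hu, hVu⟩ := hV.contDiffOn (m := 1) (by norm_num) (by simp)
  have hmem : u ∩ {x | ‖fderiv ℝ V x‖ ≤ K * ‖x - β₀‖} ∈ nhds β₀ := by
    exact Filter.inter_mem hu hK
  obtain ⟨r, hr0, hrsub⟩ := Metric.mem_nhds_iff.mp hmem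
  set K' : ℝ := max K 0 with hK'def
  have hK'0 : 0 ≤ K' := le_max_right _ _
  -- quadratic bound
  have quad : ∀ x, dist x β₀ < r → |V x - V β₀| ≤ K' * ‖x - β₀‖ ^ 2 := by
    intro x hx
    have hsub : Metric.closedBall β₀ ‖x - β₀‖ ⊆ Metric.ball β₀ r := by
      intro y hy
      simp only [Metric.mem_closedBall] at hy
      rw [Metric.mem_ball]
      calc dist y β₀ ≤ ‖x - β₀‖ := hy
        _ = dist x β₀ := by rw [dist_eq_norm]
        _ < r := hx
    have hdiff : ∀ y ∈ Metric.closedBall β₀ ‖x - β₀‖, DifferentiableAt ℝ V y := by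
      intro y hy
      have hyu : y ∈ Metric.ball β₀ r := hsub hy
      have : Metric.ball β₀ r ⊆ u := fun z hz => (hrsub hz).1
      exact ((hVu.mono this).differentiableOn one_ne_zero).differentiableAt
        (Metric.isOpen_ball.mem_nhds hyu)
    have hbd : ∀ y ∈ Metric.closedBall β₀ ‖x - β₀‖,
        ‖fderiv ℝ V y‖ ≤ K' * ‖x - β₀‖ := by
      intro y hy
      have hyb : y ∈ Metric.ball β₀ r := hsub hy
      have h1 : ‖fderiv ℝ V y‖ ≤ K * ‖y - β₀‖ := (hrsub hyb).2
      have h2 : ‖y - β₀‖ ≤ ‖x - β₀‖ := by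
        rw [← dist_eq_norm]; exact hy
      calc ‖fderiv ℝ V y‖ ≤ K * ‖y - β₀‖ := h1
        _ ≤ K' * ‖y - β₀‖ := mul_le_mul_of_nonneg_right (le_max_left _ _) (norm_nonneg _)
        _ ≤ K' * ‖x - β₀‖ := mul_le_mul_of_nonneg_left h2 hK'0
    have hxmem : x ∈ Metric.closedBall β₀ ‖x - β₀‖ := by
      simp [Metric.mem_closedBall, dist_eq_norm]
    have hβmem : β₀ ∈ Metric.closedBall β₀ ‖x - β₀‖ := by
      simp [Metric.mem_closedBall]
    have := (convex_closedBall β₀ ‖x - β₀‖).norm_image_sub_le_of_norm_fderiv_le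
      hdiff hbd hβmem hxmem
    calc |V x - V β₀| = ‖V x - V β₀‖ := rfl
      _ ≤ K' * ‖x - β₀‖ * ‖x - β₀‖ := this
      _ = K' * ‖x - β₀‖ ^ 2 := by ring
  -- eventual bound
  have hb0 : Tendsto (fun n : ℕ => C' * (n : ℝ) ^ (-(1:ℝ)/3)) atTop (nhds 0) := by
    have : Tendsto (fun n : ℕ => (n : ℝ) ^ (-(1:ℝ)/3)) atTop (nhds 0) := by
      have h := tendsto_rpow_neg_atTop (y := (1:ℝ)/3) (by norm_num)
      have := h.comp tendsto_natCast_atTop_atTop (α := ℕ)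
      simpa [neg_div, Function.comp_def] using this
    simpa using this.const_mul C'
  have hev : ∀ᶠ n : ℕ in atTop, dist (βn n) β₀ < r := by
    have h1 : ∀ᶠ n : ℕ in atTop, C' * (n : ℝ) ^ (-(1:ℝ)/3) < r :=
      hb0.eventually (eventually_lt_nhds hr0)
    filter_upwards [h1, eventually_gt_atTop 0] with n hn hn0
    rw [dist_eq_norm]
    exact lt_of_le_of_lt (hC' n hn0) hn
  refine squeeze_zero_norm' (a := fun n : ℕ => (K' * C' ^ 2) * (n : ℝ) ^ (-(1:ℝ)/6)) ?_ ?_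
  · filter_upwards [hev, eventually_gt_atTop 0] with n hn hn0
    have hn1 : (1:ℝ) ≤ (n:ℝ) := by exact_mod_cast hn0
    have hnpos : (0:ℝ) < (n:ℝ) := by positivity
    have hq := quad (βn n) hn
    have hb := hC' n hn0
    have hb2 : ‖βn n - β₀‖ ^ 2 ≤ (C' * (n : ℝ) ^ (-(1:ℝ)/3)) ^ 2 :=
      pow_le_pow_left₀ (norm_nonneg _) hb 2
    have key : ‖Real.sqrt n * (V (βn n) - V β₀)‖
        ≤ Real.sqrt n * (K' * (C' * (n : ℝ) ^ (-(1:ℝ)/3)) ^ 2) := by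
      rw [norm_mul, Real.norm_eq_abs, Real.norm_eq_abs,
        abs_of_nonneg (Real.sqrt_nonneg _)]
      exact mul_le_mul_of_nonneg_left
        (hq.trans (mul_le_mul_of_nonneg_left hb2 hK'0)) (Real.sqrt_nonneg _)
    refine key.trans (le_of_eq ?_)
    rw [Real.sqrt_eq_rpow, mul_pow, ← Real.rpow_natCast ((n:ℝ) ^ (-(1:ℝ)/3)) 2,
      ← Real.rpow_mul hnpos.le]
    have h6 : (n:ℝ) ^ ((1:ℝ)/2) * (n:ℝ) ^ (-(1:ℝ)/3 * ((2:ℕ):ℝ)) = (n:ℝ) ^ (-(1:ℝ)/6) := by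
      rw [← Real.rpow_add hnpos]; norm_num
    calc (n:ℝ)^((1:ℝ)/2) * (K' * (C'^2 * (n:ℝ)^(-(1:ℝ)/3 * ((2:ℕ):ℝ))))
        = K' * C'^2 * ((n:ℝ)^((1:ℝ)/2) * (n:ℝ)^(-(1:ℝ)/3 * ((2:ℕ):ℝ))) := by ring
      _ = K' * C'^2 * (n:ℝ)^(-(1:ℝ)/6) := by rw [h6]
  · have : Tendsto (fun n : ℕ => (n : ℝ) ^ (-(1:ℝ)/6)) atTop (nhds 0) := by
      have h := tendsto_rpow_neg_atTop (y := (1:ℝ)/6) (by norm_num)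
      have := h.comp tendsto_natCast_atTop_atTop (α := ℕ)
      simpa [neg_div, Function.comp_def] using this
    simpa using this.const_mul (K' * C' ^ 2)
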